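/- Let T : [0,1] → [0,1] be uniform-distribution preserving and continuously differentiable on an open interval (a,b) ⊂ [0,1]. Then T′(x) ≠ 0 for all x ∈ (a,b), and T is strictly monotone on (a,b). -/
import Mathlib


open MeasureTheory Set

noncomputable section

/-- The uniform distribution on `[0,1]`. -/
def unif : Measure ℝ := volume.restrict (Icc (0:ℝ) 1)

/-- `T` is uniform-distribution preserving: `T(U) ~ Uniform(0,1)` for `U ~ Uniform(0,1)`. -/
def UDP (T : ℝ → ℝ) : Prop := Measure.map T unif = unif

/-- If a udp transformation `T` is continuously differentiable on `(a,b) ⊆ [0,1]` (with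
derivative `T'`), then `T' ≠ 0` on `(a,b)` and `T` is strictly monotone on `(a,b)`. -/
theorem stmt4 (T T' : ℝ → ℝ) (hmeas : Measurable T)
    (hmaps : MapsTo T (Icc (0:ℝ) 1) (Icc (0:ℝ) 1)) (hudp : UDP T)
    (a b : ℝ) (hab : a < b) (hsub : Ioo a b ⊆ Icc (0:ℝ) 1)
    (hderiv : ∀ x ∈ Ioo a b, HasDerivAt T (T' x) x)
    (hcont : ContinuousOn T' (Ioo a b)) :
    (∀ x ∈ Ioo a b, T' x ≠ 0) ∧
      (StrictMonoOn T (Ioo a b) ∨ StrictAntiOn T (Ioo a b)) := by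
  have hopen : IsOpen (Ioo a b) := isOpen_Ioo
  have hne : ∀ x ∈ Ioo a b, T' x ≠ 0 := by
    intro x₀ hx₀ h0
    -- continuity at x₀
    have hca : ContinuousAt T' x₀ := (hcont x₀ hx₀).continuousAt (hopen.mem_nhds hx₀)
    rw [Metric.continuousAt_iff] at hca
    obtain ⟨δ₀, hδ₀, hball⟩ := hca (1/2) (by norm_num)
    set δ : ℝ := min (δ₀ / 2) (min (x₀ - a) (b - x₀)) / 2 with hδdef
    have hδpos : 0 < δ := by
      have h1 : 0 < x₀ - a := by linarith [hx₀.1]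
      have h2 : 0 < b - x₀ := by linarith [hx₀.2]
      positivity
    set s : Set ℝ := Icc (x₀ - δ) (x₀ + δ) with hsdef
    have hssub : s ⊆ Ioo a b := by
      intro y hy
      have h1 : δ ≤ (x₀ - a) / 2 := by
        have := min_le_min (le_refl (min (δ₀/2) (min (x₀-a) (b-x₀)))) (le_refl (1:ℝ))
        have h := (min_le_right (δ₀/2) (min (x₀-a) (b-x₀))).trans (min_le_left (x₀-a) (b-x₀))
        simp only [hδdef]; linarith
      have h2 : δ ≤ (b - x₀) / 2 := by
        have h := (min_le_right (δ₀/2) (min (x₀-a) (b-x₀))).trans (min_le_right (x₀-a) (b-x₀))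
        simp only [hδdef]; linarith
      constructor
      · have := hy.1; have h1a : 0 < x₀ - a := by linarith [hx₀.1]
        linarith
      · have := hy.2; have h2a : 0 < b - x₀ := by linarith [hx₀.2]
        linarith
    have hδlt : δ < δ₀ := by
      have h := min_le_left (δ₀/2) (min (x₀-a) (b-x₀))
      simp only [hδdef]; linarith
    -- derivative bound on s
    have hbound : ∀ y ∈ s, ‖T' y‖ ≤ 1/2 := by
      intro y hy
      have hdy : dist y x₀ < δ₀ := by
        rw [Real.dist_eq]
        have := hy.1; have := hy.2
        rw [abs_lt]; constructor <;> linarith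
      have := hball hdy
      rw [Real.dist_eq, h0, sub_zero] at this
      exact le_of_lt this
    -- Lipschitz bound
    have hlip : ∀ y ∈ s, |T y - T x₀| ≤ (1/2) * |y - x₀| := by
      intro y hy
      have hx₀s : x₀ ∈ s := ⟨by linarith, by linarith⟩
      have := (convex_Icc _ _).norm_image_sub_le_of_norm_hasDerivWithin_le
        (f := T) (f' := T') (C := 1/2)
        (fun z hz => ((hderiv z (hssub hz)).hasDerivWithinAt)) hbound hx₀s hy
      simpa [Real.norm_eq_abs] using this
    -- T maps s into J
    set J : Set ℝ := Icc (T x₀ - δ/2) (T x₀ + δ/2) with hJdef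
    have hmapsJ : ∀ y ∈ s, T y ∈ J := by
      intro y hy
      have h1 : |y - x₀| ≤ δ := by
        rw [abs_le]; constructor
        · linarith [hy.1]
        · linarith [hy.2]
      have h2 := hlip y hy
      have h3 : |T y - T x₀| ≤ δ/2 := by
        calc |T y - T x₀| ≤ (1/2) * |y - x₀| := h2
          _ ≤ (1/2) * δ := by linarith [abs_nonneg (y - x₀)]
          _ = δ/2 := by ring
      rw [abs_le] at h3
      constructor <;> [linarith [h3.1]; linarith [h3.2]]
    -- measure computation
    have hJmeas : MeasurableSet J := measurableSet_Icc
    have key : unif J = unif (T ⁻¹' J) := by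
      conv_lhs => rw [← hudp]
      rw [Measure.map_apply hmeas hJmeas]
    have h1 : unif (T ⁻¹' J) ≥ ENNReal.ofReal (2 * δ) := by
      have hsubpre : s ⊆ T ⁻¹' J := fun y hy => hmapsJ y hy
      have : unif s ≤ unif (T ⁻¹' J) := measure_mono hsubpre
      have hs01 : s ⊆ Icc (0:ℝ) 1 := hssub.trans hsub
      have hunifs : unif s = ENNReal.ofReal (2 * δ) := by
        rw [unif, Measure.restrict_apply' measurableSet_Icc, inter_eq_self_of_subset_left hs01,
          Real.volume_Icc]
        ring_nf
      rw [← hunifs]; exact this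
    have h2 : unif J ≤ ENNReal.ofReal δ := by
      have : unif J ≤ volume J := by
        rw [unif]; exact Measure.restrict_le_self J
      rw [Real.volume_Icc] at this
      convert this using 2
      ring
    have : ENNReal.ofReal (2 * δ) ≤ ENNReal.ofReal δ := by
      calc ENNReal.ofReal (2 * δ) ≤ unif (T ⁻¹' J) := h1
        _ = unif J := key.symm
        _ ≤ ENNReal.ofReal δ := h2
    rw [ENNReal.ofReal_le_ofReal_iff (le_of_lt hδpos)] at this
    linarith
  refine ⟨hne, ?_⟩
  have hTcont : ContinuousOn T (Ioo a b) :=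
    fun x hx => ((hderiv x hx).continuousAt).continuousWithinAt
  have hderiv' : ∀ x ∈ Ioo a b, deriv T x = T' x := fun x hx => (hderiv x hx).deriv
  -- sign is constant
  have hmid : (a + b) / 2 ∈ Ioo a b := ⟨by linarith, by linarith⟩
  rcases lt_or_gt_of_ne (hne _ hmid) with hneg | hpos
  · right
    apply strictAntiOn_of_deriv_neg (convex_Ioo a b) hTcont
    intro x hx
    rw [interior_Ioo] at hx
    rw [hderiv' x hx]
    -- show T' x < 0 by IVT
    by_contra h
    push_neg at h
    have hxpos : 0 < T' x := lt_of_le_of_ne h (Ne.symm (hne x hx))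
    have huIcc : uIcc ((a+b)/2) x ⊆ Ioo a b :=
      (convex_Ioo a b).ordConnected.uIcc_subset hmid hx
    have hcc : ContinuousOn T' (uIcc ((a+b)/2) x) := hcont.mono huIcc
    have h0mem : (0:ℝ) ∈ uIcc (T' ((a+b)/2)) (T' x) := by
      rw [Set.mem_uIcc]; left; exact ⟨le_of_lt hneg, le_of_lt hxpos⟩
    obtain ⟨z, hz, hz0⟩ := intermediate_value_uIcc hcc h0mem
    exact hne z (huIcc hz) hz0
  · left
    apply strictMonoOn_of_deriv_pos (convex_Ioo a b) hTcont
    intro x hx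
    rw [interior_Ioo] at hx
    rw [hderiv' x hx]
    by_contra h
    push_neg at h
    have hxneg : T' x < 0 := lt_of_le_of_ne h (hne x hx)
    have huIcc : uIcc ((a+b)/2) x ⊆ Ioo a b :=
      (convex_Ioo a b).ordConnected.uIcc_subset hmid hx
    have hcc : ContinuousOn T' (uIcc ((a+b)/2) x) := hcont.mono huIcc
    have h0mem : (0:ℝ) ∈ uIcc (T' ((a+b)/2)) (T' x) := by
      rw [Set.mem_uIcc]; right; exact ⟨le_of_lt hxneg, le_of_lt hpos⟩
    obtain ⟨z, hz, hz0⟩ := intermediate_value_uIcc hcc h0mem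
    exact hne z (huIcc hz) hz0

end
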